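/- Let F be the set of feasible edges (those with c_i ≤ B), let i* be an edge of maximum value in F with value v_{i*}, let OPT be the maximum value of a budget-feasible matching within F, let OPT' be the maximum value of a budget-feasible matching within F \ {i*}, and let v_{i'} = max{v_i : i ∈ F \ {i*}} (taken as 0 if F \ {i*} is empty). If v_G is a real number with v_G ≥ (1/2)·(OPT' - v_{i'}), then 4·max{v_{i*}, v_G} ≥ OPT. -/
import Mathlib


open Finset

/-- A set of (indices of) edges is a matching if the corresponding edges are pairwise
vertex-disjoint. -/
def IsMatchingIdx {V : Type} {m : ℕ} (edge : Fin m → Sym2 V) (M : Finset (Fin m)) : Prop :=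
  (M : Set (Fin m)).Pairwise fun i k => ∀ a, a ∈ edge i → a ∉ edge k

/-- **Det-ISK's approximation for Budgeted Max Weighted Matching.**
Let `i*` be a feasible edge of maximum value, `OPT` the maximum value of a budget-feasible
matching of feasible edges, `OPT'` the maximum value of a budget-feasible matching within
the feasible edges other than `i*`, and `v_{i'}` the maximum value of a feasible edge
other than `i*` (or `0` if none exists). If `v_G ≥ (1/2)(OPT' - v_{i'})`, then
`4·max{v_{i*}, v_G} ≥ OPT`. -/
theorem det_isk_approximation (V : Type) [Fintype V] [DecidableEq V]
    (m : ℕ) (edge : Fin m → Sym2 V) (hinj : Function.Injective edge)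
    (hsimple : ∀ i, ¬ (edge i).IsDiag)
    (v c : Fin m → ℝ) (hv : ∀ i, 0 < v i) (hc : ∀ i, 0 ≤ c i)
    (B : ℝ) (hB : 0 < B)
    (istar : Fin m) (histar : c istar ≤ B) (hmax : ∀ i, c i ≤ B → v i ≤ v istar)
    (OPT : ℝ)
    (hOPT : IsGreatest {t : ℝ | ∃ M : Finset (Fin m), IsMatchingIdx edge M ∧
      (∀ i ∈ M, c i ≤ B) ∧ (∑ i ∈ M, c i) ≤ B ∧ t = ∑ i ∈ M, v i} OPT)
    (OPT' : ℝ)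
    (hOPT' : IsGreatest {t : ℝ | ∃ M : Finset (Fin m), IsMatchingIdx edge M ∧
      (∀ i ∈ M, c i ≤ B ∧ i ≠ istar) ∧ (∑ i ∈ M, c i) ≤ B ∧ t = ∑ i ∈ M, v i} OPT')
    (vi' : ℝ)
    (hvi' : IsGreatest (insert (0 : ℝ) {t : ℝ | ∃ i : Fin m, (c i ≤ B ∧ i ≠ istar) ∧ t = v i}) vi')
    (vG : ℝ) (hG : vG ≥ (1 / 2) * (OPT' - vi')) :
    4 * max (v istar) vG ≥ OPT := by
  -- vi' ≤ v istar
  have hvi'le : vi' ≤ v istar := by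
    rcases hvi'.1 with h0 | ⟨i, ⟨hiB, _⟩, rfl⟩
    · simpa [h0] using (hv istar).le
    · exact hmax i hiB
  -- OPT ≤ OPT' + v istar
  obtain ⟨M, hM, hMB, hMc, hMv⟩ := hOPT.1
  have hOPTle : OPT ≤ OPT' + v istar := by
    have hmem : (∑ i ∈ M.erase istar, v i) ∈ {t : ℝ | ∃ M : Finset (Fin m),
        IsMatchingIdx edge M ∧ (∀ i ∈ M, c i ≤ B ∧ i ≠ istar) ∧
        (∑ i ∈ M, c i) ≤ B ∧ t = ∑ i ∈ M, v i} := by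
      refine ⟨M.erase istar, ?_, ?_, ?_, rfl⟩
      · exact hM.mono (by simp [Finset.coe_subset, Finset.erase_subset])
      · intro i hi
        exact ⟨hMB i (Finset.mem_of_mem_erase hi), Finset.ne_of_mem_erase hi⟩
      · exact le_trans (Finset.sum_le_sum_of_subset_of_nonneg (Finset.erase_subset _ _)
          (fun i _ _ => hc i)) hMc
    have h1 : (∑ i ∈ M.erase istar, v i) ≤ OPT' := hOPT'.2 hmem
    by_cases hmemM : istar ∈ M
    · have : OPT = (∑ i ∈ M.erase istar, v i) + v istar := by
        rw [hMv, ← Finset.add_sum_erase _ _ hmemM]; ring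
      linarith
    · have : OPT = ∑ i ∈ M.erase istar, v i := by
        rw [hMv, Finset.erase_eq_of_notMem hmemM]
      linarith [(hv istar).le]
  have h1 : v istar ≤ max (v istar) vG := le_max_left _ _
  have h2 : vG ≤ max (v istar) vG := le_max_right _ _
  linarith
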